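/- Let A and B be finite types, let ρ and σ be density matrices on A × B whose reduced matrices ρ_A, ρ_B, σ_A, σ_B are all diagonal, and let λ be a real number with 0 ≤ λ ≤ 1. Define τ on (A × Fin 2) × (B × Fin 2) by: τ ((a,x),(b,y)) ((c,x'),(d,y')) = λ · ρ (a,b) (c,d) if x = x' = y = y' = 0; (1−λ) · σ (a,b) (c,d) if x = x' = y = y' = 1; and 0 otherwise (i.e., τ = λ ρ ⊗ |0,0⟩⟨0,0| + (1−λ) σ ⊗ |1,1⟩⟨1,1| with classical flag registers appended to each side). Then τ is a density matrix, the reduced matrices of τ on A × Fin 2 and on B × Fin 2 are diagonal, and C(τ) = λ · C(ρ) + (1−λ) · C(σ). -/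

import Mathlib

open Matrix
open scoped ComplexOrder

/-- The `l₁`-coherence of a matrix with respect to the standard basis:
the sum of the absolute values of all off-diagonal entries. -/
noncomputable def coh {ι : Type} [Fintype ι] [DecidableEq ι] (M : Matrix ι ι ℂ) : ℝ :=
  ∑ i, ∑ j, if i ≠ j then ‖M i j‖ else 0

set_option maxHeartbeats 2000000 in
/-- Appending classical flag registers to each side, the flagged mixture
`τ = λ ρ ⊗ |0,0⟩⟨0,0| + (1−λ) σ ⊗ |1,1⟩⟨1,1|` of two bipartite states with
diagonal reduced states is a density matrix with diagonal reduced states whose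
coherence is exactly the corresponding convex combination of coherences. -/
theorem stmt_9 {A B : Type} [Fintype A] [DecidableEq A] [Fintype B] [DecidableEq B]
    (ρ σ : Matrix (A × B) (A × B) ℂ)
    (hρ : ρ.PosSemidef) (hρtr : ρ.trace = 1)
    (hσ : σ.PosSemidef) (hσtr : σ.trace = 1)
    (hρA : (Matrix.of fun i k : A => ∑ j : B, ρ (i, j) (k, j)).IsDiag)
    (hρB : (Matrix.of fun j l : B => ∑ i : A, ρ (i, j) (i, l)).IsDiag)
    (hσA : (Matrix.of fun i k : A => ∑ j : B, σ (i, j) (k, j)).IsDiag)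
    (hσB : (Matrix.of fun j l : B => ∑ i : A, σ (i, j) (i, l)).IsDiag)
    (l : ℝ) (hl0 : 0 ≤ l) (hl1 : l ≤ 1)
    (τ : Matrix ((A × Fin 2) × (B × Fin 2)) ((A × Fin 2) × (B × Fin 2)) ℂ)
    (hτ : τ = Matrix.of fun p q : (A × Fin 2) × (B × Fin 2) =>
      if p.1.2 = 0 ∧ p.2.2 = 0 ∧ q.1.2 = 0 ∧ q.2.2 = 0 then
        (l : ℂ) * ρ (p.1.1, p.2.1) (q.1.1, q.2.1)
      else if p.1.2 = 1 ∧ p.2.2 = 1 ∧ q.1.2 = 1 ∧ q.2.2 = 1 then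
        ((1 - l : ℝ) : ℂ) * σ (p.1.1, p.2.1) (q.1.1, q.2.1)
      else 0) :
    τ.PosSemidef ∧ τ.trace = 1 ∧
    (Matrix.of fun x x' : A × Fin 2 => ∑ y : B × Fin 2, τ (x, y) (x', y)).IsDiag ∧
    (Matrix.of fun y y' : B × Fin 2 => ∑ x : A × Fin 2, τ (x, y) (x, y')).IsDiag ∧
    coh τ = l * coh ρ + (1 - l) * coh σ := by
  subst hτ
  refine ⟨?_, ?_, ?_, ?_, ?_⟩
  · -- PosSemidef
    refine PosSemidef.of_dotProduct_mulVec_nonneg ?_ ?_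
    · ext p q
      simp only [conjTranspose_apply, Matrix.of_apply]
      by_cases h0 : p.1.2 = 0 ∧ p.2.2 = 0 ∧ q.1.2 = 0 ∧ q.2.2 = 0
      · rw [if_pos ⟨h0.2.2.1, h0.2.2.2, h0.1, h0.2.1⟩, if_pos h0, star_mul']
        simp only [Complex.star_def, Complex.conj_ofReal]
        rw [← Complex.star_def, ← hρ.1.apply, star_star]
      · by_cases h1 : p.1.2 = 1 ∧ p.2.2 = 1 ∧ q.1.2 = 1 ∧ q.2.2 = 1
        · rw [if_neg (fun h => h0 ⟨h.2.2.1, h.2.2.2, h.1, h.2.1⟩),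
            if_pos ⟨h1.2.2.1, h1.2.2.2, h1.1, h1.2.1⟩, if_neg h0, if_pos h1, star_mul']
          simp only [Complex.star_def, Complex.conj_ofReal]
          rw [← Complex.star_def, ← hσ.1.apply, star_star]
        · rw [if_neg (by tauto), if_neg (by tauto), if_neg h0, if_neg h1, star_zero]
    · intro v
      have h0 := hρ.dotProduct_mulVec_nonneg (fun p : A × B => v ((p.1, 0), (p.2, 0)))
      have h1 := hσ.dotProduct_mulVec_nonneg (fun p : A × B => v ((p.1, 1), (p.2, 1)))
      have key : star v ⬝ᵥ (Matrix.of fun p q : (A × Fin 2) × (B × Fin 2) =>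
        if p.1.2 = 0 ∧ p.2.2 = 0 ∧ q.1.2 = 0 ∧ q.2.2 = 0 then
          (l : ℂ) * ρ (p.1.1, p.2.1) (q.1.1, q.2.1)
        else if p.1.2 = 1 ∧ p.2.2 = 1 ∧ q.1.2 = 1 ∧ q.2.2 = 1 then
          ((1 - l : ℝ) : ℂ) * σ (p.1.1, p.2.1) (q.1.1, q.2.1)
        else 0).mulVec v
        = (l : ℂ) * (star (fun p : A × B => v ((p.1, 0), (p.2, 0))) ⬝ᵥ
            ρ.mulVec (fun p : A × B => v ((p.1, 0), (p.2, 0))))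
          + ((1 - l : ℝ) : ℂ) * (star (fun p : A × B => v ((p.1, 1), (p.2, 1))) ⬝ᵥ
            σ.mulVec (fun p : A × B => v ((p.1, 1), (p.2, 1)))) := by
        simp only [dotProduct, mulVec, Pi.star_apply, Matrix.of_apply,
          Fintype.sum_prod_type, Fin.sum_univ_two]
        simp only [show ((0:Fin 2) = 1) = False by simp,
          show ((1:Fin 2) = 0) = False by simp,
          and_false, false_and, and_true, true_and, if_false, if_true, ite_false, ite_true,
          zero_mul, mul_zero, add_zero, zero_add, Finset.sum_const_zero,
          Finset.mul_sum, Finset.sum_add_distrib, mul_ite]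
        congr 1 <;>
          (apply Finset.sum_congr rfl; intros; apply Finset.sum_congr rfl; intros;
           apply Finset.sum_congr rfl; intros; apply Finset.sum_congr rfl; intros; ring)
      rw [key]
      have hl0' : (0:ℂ) ≤ (l:ℂ) := by rw [Complex.zero_le_real]; exact hl0
      have hl1' : (0:ℂ) ≤ ((1 - l : ℝ):ℂ) := by rw [Complex.zero_le_real]; linarith
      exact add_nonneg (mul_nonneg hl0' h0) (mul_nonneg hl1' h1)
  · -- trace
    simp only [Matrix.trace, Matrix.diag, Matrix.of_apply, Fintype.sum_prod_type,
      Fin.sum_univ_two]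
    simp only [Matrix.trace, Matrix.diag, Fintype.sum_prod_type] at hρtr hσtr
    simp only [show ((0:Fin 2) = 1) = False by simp, show ((1:Fin 2) = 0) = False by simp]
    simp only [and_true, and_false, false_and, if_true, if_false, ite_false, ite_true,
      true_and, eq_self_iff_true, add_zero, zero_add, Finset.sum_add_distrib,
      Finset.sum_sub_distrib, ← Finset.mul_sum, hρtr, hσtr, if_pos trivial]
    push_cast
    ring
  · -- reduced on A × Fin 2
    rintro ⟨a, x⟩ ⟨a', x'⟩ hne
    simp only [Matrix.of_apply, Fintype.sum_prod_type, Fin.sum_univ_two]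
    fin_cases x <;> fin_cases x' <;>
      simp_all [Prod.ext_iff, ← Finset.mul_sum] <;> tauto
  · -- reduced on B × Fin 2
    rintro ⟨b, y⟩ ⟨b', y'⟩ hne
    simp only [Matrix.of_apply, Fintype.sum_prod_type, Fin.sum_univ_two]
    fin_cases y <;> fin_cases y' <;>
      simp_all [Prod.ext_iff, ← Finset.mul_sum] <;> tauto
  · -- coherence
    clear hρ hσ hρtr hσtr hρA hρB hσA hσB
    simp only [coh, Fintype.sum_prod_type, Fin.sum_univ_two, Matrix.of_apply,
      Prod.mk.injEq, ne_eq, Prod.ext_iff]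
    simp only [show ((0:Fin 2) = 1) = False by simp, show ((1:Fin 2) = 0) = False by simp,
      and_false, false_and, and_true, true_and, if_false, if_true, ite_false, ite_true,
      norm_zero, ite_self, Finset.sum_const_zero, Real.norm_eq_abs, add_zero, zero_add,
      not_and, norm_mul, Complex.norm_real,
      abs_of_nonneg hl0, abs_of_nonneg (by linarith : (0:ℝ) ≤ 1 - l)]
    simp only [Finset.mul_sum, Finset.sum_add_distrib, mul_ite, mul_zero]
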